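/- Let V be finite with |V| = n vertices, and suppose for each vertex v connected to s a shortest walk σ(v) from s to v with length(σ(v)) ≤ k is fixed. Then the union over such v of the edge sets of the walks σ(v) has cardinality at most k·n. Consequently, if G has m edges, the edge set of the condensed transition graph G*_k has cardinality at most m + 2·k·n. -/
import Mathlib


open SimpleGraph

/-- A walk `w` contains the edge `(u, v)` if some step (dart) of `w` goes from `u` to `v`. -/
def ContainsEdge {V : Type*} (G : SimpleGraph V) {s t : V} (w : G.Walk s t) (u v : V) : Prop :=
  ∃ d ∈ w.darts, d.toProd = (u, v)

/-- The edge set of the condensed transition graph `G*_k`: the union, over all edges `(u, v)` of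
`G` contained in some `s`–`t` walk of length at most `k` in `G`, of the edges of the fixed
shortest walk `σ u : s → u`, the edge `(u, v)` itself, and the edges of the fixed shortest walk
`τ v : v → t`. -/
def condensedEdgeSet {V : Type*} (G : SimpleGraph V) (s t : V) (k : ℕ)
    (σ : ∀ w : V, G.Reachable s w → G.Walk s w)
    (τ : ∀ w : V, G.Reachable w t → G.Walk w t) : Set (Sym2 V) :=
  {e | ∃ u v, G.Adj u v ∧ (∃ w : G.Walk s t, w.length ≤ k ∧ ContainsEdge G w u v) ∧
    (e = s(u, v) ∨ (∃ hu : G.Reachable s u, e ∈ (σ u hu).edges) ∨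
      (∃ hv : G.Reachable v t, e ∈ (τ v hv).edges))}

lemma union_edges_bound {V : Type*} [Fintype V] (G : SimpleGraph V)
    (s : V) (k : ℕ)
    (σ : ∀ w : V, G.Reachable s w → G.Walk s w)
    (hσk : ∀ (w : V) (h : G.Reachable s w), (σ w h).length ≤ k) :
    (⋃ (v : V) (h : G.Reachable s v), {e | e ∈ (σ v h).edges}).ncard ≤ k * Fintype.card V := by
  classical
  set F : V → Finset (Sym2 V) := fun v =>
    if h : G.Reachable s v then (σ v h).edges.toFinset else ∅ with hF
  have hEq : (⋃ (v : V) (h : G.Reachable s v), {e | e ∈ (σ v h).edges})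
      = ↑(Finset.univ.biUnion F) := by
    ext e
    simp only [Set.mem_iUnion, Set.mem_setOf_eq, Finset.coe_biUnion, Finset.mem_coe,
      Finset.mem_univ, Set.iUnion_true, hF]
    constructor
    · rintro ⟨v, h, he⟩
      exact ⟨v, by simp [h, he]⟩
    · rintro ⟨v, hv⟩
      by_cases h : G.Reachable s v
      · exact ⟨v, h, by simpa [h] using hv⟩
      · simp [h] at hv
  rw [hEq, Set.ncard_coe_finset]
  calc (Finset.univ.biUnion F).card ≤ ∑ v : V, (F v).card := Finset.card_biUnion_le
    _ ≤ ∑ _v : V, k := by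
        apply Finset.sum_le_sum
        intro v _
        by_cases h : G.Reachable s v
        · simp only [hF, h, dif_pos]
          calc (σ v h).edges.toFinset.card ≤ (σ v h).edges.length :=
                List.toFinset_card_le _
            _ = (σ v h).length := (σ v h).length_edges
            _ ≤ k := hσk v h
        · simp [hF, h]
    _ = k * Fintype.card V := by simp [Finset.sum_const, mul_comm]

/-- with `|V| = n` and fixed shortest walks `σ v : s → v` of length at most `k`
(and likewise `τ v : v → t`), the union over `v` of the edge sets of the walks `σ v` has at most
`k * n` elements; consequently, if `G` has `m` edges, the edge set of the condensed transition
graph `G*_k` has at most `m + 2 * k * n` elements. -/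
theorem condensed_edgeSet_card_bound {V : Type*} [Fintype V] (G : SimpleGraph V)
    (s t : V) (k n m : ℕ) (hn : Fintype.card V = n) (hm : G.edgeSet.ncard = m)
    (σ : ∀ w : V, G.Reachable s w → G.Walk s w)
    (hσ : ∀ (w : V) (h : G.Reachable s w), (σ w h).length = G.dist s w)
    (hσk : ∀ (w : V) (h : G.Reachable s w), (σ w h).length ≤ k)
    (τ : ∀ w : V, G.Reachable w t → G.Walk w t)
    (hτ : ∀ (w : V) (h : G.Reachable w t), (τ w h).length = G.dist w t)
    (hτk : ∀ (w : V) (h : G.Reachable w t), (τ w h).length ≤ k) :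
    (⋃ (v : V) (h : G.Reachable s v), {e | e ∈ (σ v h).edges}).ncard ≤ k * n ∧
      (condensedEdgeSet G s t k σ τ).ncard ≤ m + 2 * k * n := by
  classical
  subst hn hm
  have hA : (⋃ (v : V) (h : G.Reachable s v), {e | e ∈ (σ v h).edges}).ncard
      ≤ k * Fintype.card V := union_edges_bound G s k σ hσk
  set τ' : ∀ w : V, G.Reachable t w → G.Walk t w :=
    fun w h => (τ w h.symm).reverse with hτ'
  have hτ'k : ∀ (w : V) (h : G.Reachable t w), (τ' w h).length ≤ k := by
    intro w h
    simpa [hτ', Walk.length_reverse] using hτk w h.symm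
  have hB : (⋃ (v : V) (h : G.Reachable v t), {e | e ∈ (τ v h).edges}).ncard
      ≤ k * Fintype.card V := by
    have := union_edges_bound G t k τ' hτ'k
    have heq : (⋃ (v : V) (h : G.Reachable t v), {e | e ∈ (τ' v h).edges})
        = (⋃ (v : V) (h : G.Reachable v t), {e | e ∈ (τ v h).edges}) := by
      ext e
      simp only [Set.mem_iUnion, Set.mem_setOf_eq, hτ', Walk.edges_reverse, List.mem_reverse]
      exact ⟨fun ⟨v, h, he⟩ => ⟨v, h.symm, he⟩, fun ⟨v, h, he⟩ => ⟨v, h.symm, he⟩⟩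
    rwa [heq] at this
  refine ⟨hA, ?_⟩
  have hsub : condensedEdgeSet G s t k σ τ ⊆
      G.edgeSet ∪ ((⋃ (v : V) (h : G.Reachable s v), {e | e ∈ (σ v h).edges}) ∪
        (⋃ (v : V) (h : G.Reachable v t), {e | e ∈ (τ v h).edges})) := by
    rintro e ⟨u, v, hadj, -, hcase⟩
    rcases hcase with rfl | ⟨hu, he⟩ | ⟨hv, he⟩
    · exact Or.inl hadj
    · exact Or.inr (Or.inl (Set.mem_iUnion.2 ⟨u, Set.mem_iUnion.2 ⟨hu, he⟩⟩))
    · exact Or.inr (Or.inr (Set.mem_iUnion.2 ⟨v, Set.mem_iUnion.2 ⟨hv, he⟩⟩))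
  calc (condensedEdgeSet G s t k σ τ).ncard
      ≤ (G.edgeSet ∪ ((⋃ (v : V) (h : G.Reachable s v), {e | e ∈ (σ v h).edges}) ∪
        (⋃ (v : V) (h : G.Reachable v t), {e | e ∈ (τ v h).edges}))).ncard :=
        Set.ncard_le_ncard hsub (Set.toFinite _)
    _ ≤ G.edgeSet.ncard + ((⋃ (v : V) (h : G.Reachable s v), {e | e ∈ (σ v h).edges}) ∪
        (⋃ (v : V) (h : G.Reachable v t), {e | e ∈ (τ v h).edges})).ncard :=
        Set.ncard_union_le _ _
    _ ≤ G.edgeSet.ncard + ((⋃ (v : V) (h : G.Reachable s v), {e | e ∈ (σ v h).edges}).ncard +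
        (⋃ (v : V) (h : G.Reachable v t), {e | e ∈ (τ v h).edges}).ncard) := by
        exact Nat.add_le_add_left (Set.ncard_union_le _ _) _
    _ ≤ G.edgeSet.ncard + (k * Fintype.card V + k * Fintype.card V) :=
        Nat.add_le_add_left (Nat.add_le_add hA hB) _
    _ = G.edgeSet.ncard + 2 * k * Fintype.card V := by ring
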